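/- Consider the homogeneous pinning model (\omega_n \equiv 1) for the (p,q)-walk with 0 < p < 1. Then \lim_{\beta \to \infty} \beta\,( f_c(\beta) - 1 ) = \log q - \log(p/2); equivalently, f_c(\beta) = 1 + \beta^{-1}(\log q - \log(p/2)) + o(1/\beta) as \beta \to \infty. -/

import Mathlib

open Filter Finset

noncomputable section
open scoped Classical

/-- The three possible increments of the `(p,q)`-walk: `-1, 0, +1`. -/
def step : Fin 3 → ℤ := ![-1, 0, 1]

/-- The probability weights of the three increments: `p/2, q = 1-p, p/2`. -/
def wt (p : ℝ) : Fin 3 → ℝ := ![p / 2, 1 - p, p / 2]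

/-- Position of the walk after `n` steps, given the increments `ξ`. -/
def pos {N : ℕ} (ξ : Fin N → Fin 3) (n : ℕ) : ℤ :=
  ∑ i : Fin N, if (i : ℕ) < n then step (ξ i) else 0

/-- Probability weight of the path with increments `ξ`. -/
def pwt (p : ℝ) {N : ℕ} (ξ : Fin N → Fin 3) : ℝ := ∏ i : Fin N, wt p (ξ i)

/-- The pinning partition function `Z_{N,ω}^{β,f}` of the `(p,q)`-walk with
charges `ω`, inverse temperature `β` and force `f`. -/
def Z (p : ℝ) (ω : ℕ → ℝ) (β f : ℝ) (N : ℕ) : ℝ :=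
  ∑ ξ : Fin N → Fin 3,
    pwt p ξ *
      Real.exp (β * ∑ n ∈ Finset.Icc 1 N, (if pos ξ n = 0 then ω n else 0)
        + β * f * ((pos ξ N : ℤ) : ℝ))

/-- `g(y) = log (p cosh y + q)`. -/
def g (p y : ℝ) : ℝ := Real.log (p * Real.cosh y + (1 - p))

/- ### Auxiliary lemmas -/

lemma step_cases : ∀ a : Fin 3, step a = -1 ∨ step a = 0 ∨ step a = 1 := by decide

/-- The key combinatorial bound: twice the number of pinned times plus the
number of nonzero increments is at most `2N`. -/
lemma key_count {N : ℕ} (ξ : Fin N → Fin 3) :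
    2 * ((Finset.Icc 1 N).filter (fun n => pos ξ n = 0)).card
      + (Finset.univ.filter (fun i : Fin N => step (ξ i) ≠ 0)).card ≤ 2 * N := by
  classical
  set M : Finset (Fin N) := Finset.univ.filter (fun i => step (ξ i) ≠ 0) with hM
  set m := M.card with hm
  set c : ℕ → ℕ := fun n => (M.filter (fun i : Fin N => (i : ℕ) < n)).card with hc
  have c_mono : ∀ {a b : ℕ}, a ≤ b → c a ≤ c b := by
    intro a b hab
    apply Finset.card_le_card
    intro i hi
    simp only [Finset.mem_filter] at hi ⊢
    exact ⟨hi.1, lt_of_lt_of_le hi.2 hab⟩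
  have c_le : ∀ n, c n ≤ m := fun n => Finset.card_le_card (Finset.filter_subset _ _)
  have hpos : ∀ n, pos ξ n = ∑ i ∈ M.filter (fun i : Fin N => (i : ℕ) < n), step (ξ i) := by
    intro n
    rw [pos, ← Finset.sum_filter]
    rw [hM, Finset.filter_comm]
    exact (Finset.sum_filter_ne_zero _).symm
  have c_even : ∀ n, pos ξ n = 0 → 2 ∣ c n := by
    intro n hn
    rw [hpos n] at hn
    have h1 : ∑ i ∈ M.filter (fun i : Fin N => (i : ℕ) < n), ((step (ξ i) : ZMod 2)) = (c n : ZMod 2) := by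
      rw [Finset.sum_congr rfl (fun i hi => ?_), Finset.sum_const, nsmul_eq_mul, mul_one, hc]
      have hiM : i ∈ M := (Finset.mem_filter.mp hi).1
      have hne : step (ξ i) ≠ 0 := by
        rw [hM] at hiM; exact (Finset.mem_filter.mp hiM).2
      rcases step_cases (ξ i) with h | h | h <;> rw [h]
      · decide
      · exact absurd h hne
      · decide
    have h2 : (∑ i ∈ M.filter (fun i : Fin N => (i : ℕ) < n), ((step (ξ i) : ZMod 2))) = 0 := by
      have := congrArg (fun z : ℤ => (z : ZMod 2)) hn
      push_cast at this
      exact this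
    exact (ZMod.natCast_eq_zero_iff _ 2).mp (h1.symm.trans h2)
  have hstep_lt : ∀ (n : ℕ) (h : n - 1 < N), 1 ≤ n → step (ξ ⟨n - 1, h⟩) ≠ 0 → c (n - 1) < c n := by
    intro n h h1 hne
    apply Finset.card_lt_card
    have hsub : M.filter (fun i : Fin N => (i : ℕ) < n - 1) ⊆ M.filter (fun i : Fin N => (i : ℕ) < n) := by
      intro i hi
      simp only [Finset.mem_filter] at hi ⊢
      exact ⟨hi.1, lt_of_lt_of_le hi.2 (Nat.sub_le n 1)⟩
    refine (Finset.ssubset_iff_of_subset hsub).mpr ⟨⟨n - 1, h⟩, ?_, ?_⟩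
    · simp only [hM, Finset.mem_filter, Finset.mem_univ, true_and]
      exact ⟨hne, by omega⟩
    · simp only [Finset.mem_filter]
      rintro ⟨-, h2⟩
      omega
  set S : Finset ℕ := (Finset.Icc 1 N).filter (fun n => pos ξ n = 0) with hS
  have hS_mem : ∀ n ∈ S, 1 ≤ n ∧ n ≤ N ∧ pos ξ n = 0 := by
    intro n hn
    simp only [hS, Finset.mem_filter, Finset.mem_Icc] at hn
    exact ⟨hn.1.1, hn.1.2, hn.2⟩
  set S0 := S.filter (fun n => c n = c (n - 1)) with hS0
  set S1 := S.filter (fun n => ¬c n = c (n - 1)) with hS1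
  have hsplit : S0.card + S1.card = S.card :=
    Finset.card_filter_add_card_filter_not _
  set G : Finset ℕ := (Finset.univ.filter (fun i : Fin N => step (ξ i) = 0)).image Fin.val with hG
  have hGcard : G.card + m = N := by
    rw [hG, Finset.card_image_of_injective _ Fin.val_injective, hm, hM]
    have := Finset.card_filter_add_card_filter_not (s := (Finset.univ : Finset (Fin N)))
      (fun i => step (ξ i) = 0)
    simpa using this
  have hS0card : S0.card ≤ G.card := by
    apply Finset.card_le_card_of_injOn (fun n => n - 1)
    · intro n hn
      have hn' := hS_mem n (Finset.mem_filter.mp hn).1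
      have hceq : c n = c (n - 1) := (Finset.mem_filter.mp hn).2
      have hlt : n - 1 < N := by omega
      have hz : step (ξ ⟨n - 1, hlt⟩) = 0 := by
        by_contra hne
        have := hstep_lt n hlt hn'.1 hne
        omega
      simp only [hG, Finset.mem_coe, Finset.mem_image, Finset.mem_filter, Finset.mem_univ, true_and]
      exact ⟨⟨n - 1, hlt⟩, hz, rfl⟩
    · intro a ha b hb hab
      simp only at hab
      have ha' := hS_mem a (Finset.mem_filter.mp ha).1
      have hb' := hS_mem b (Finset.mem_filter.mp hb).1
      omega
  have hS1card : S1.card ≤ m / 2 := by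
    have := Finset.card_le_card_of_injOn (s := S1) (t := Finset.Icc 1 (m / 2)) (fun n => c n / 2) ?_ ?_
    · simpa [Nat.card_Icc] using this
    · intro n hn
      have hn' := hS_mem n (Finset.mem_filter.mp hn).1
      have hceq : ¬c n = c (n - 1) := (Finset.mem_filter.mp hn).2
      have heven := c_even n hn'.2.2
      have hmono : c (n - 1) ≤ c n := c_mono (Nat.sub_le n 1)
      have hle := c_le n
      simp only [Finset.mem_coe, Finset.mem_Icc]
      omega
    · intro a ha b hb hab
      simp only at hab
      by_contra hne
      have ha1 := hS_mem a (Finset.mem_filter.mp ha).1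
      have hb1 := hS_mem b (Finset.mem_filter.mp hb).1
      have hae := c_even a ha1.2.2
      have hbe := c_even b hb1.2.2
      have hca : c (a - 1) < c a := by
        have := (Finset.mem_filter.mp ha).2
        have := c_mono (Nat.sub_le a 1)
        omega
      have hcb : c (b - 1) < c b := by
        have := (Finset.mem_filter.mp hb).2
        have := c_mono (Nat.sub_le b 1)
        omega
      rcases lt_or_gt_of_ne hne with h | h
      · have h1 : c a ≤ c (b - 1) := c_mono (by omega)
        omega
      · have h1 : c b ≤ c (a - 1) := c_mono (by omega)
        omega
  omega

lemma wt_nonneg {p : ℝ} (hp : 0 ≤ p) (hp1 : p ≤ 1) (a : Fin 3) : 0 ≤ wt p a := by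
  fin_cases a <;> simp [wt] <;> linarith

lemma pwt_nonneg {p : ℝ} (hp : 0 ≤ p) (hp1 : p ≤ 1) {N : ℕ} (ξ : Fin N → Fin 3) :
    0 ≤ pwt p ξ :=
  Finset.prod_nonneg fun i _ => wt_nonneg hp hp1 _

lemma pin_sum_eq {N : ℕ} (ξ : Fin N → Fin 3) :
    (∑ n ∈ Finset.Icc 1 N, (if pos ξ n = 0 then (1 : ℝ) else 0))
      = ((Finset.Icc 1 N).filter (fun n => pos ξ n = 0)).card := by
  rw [Finset.sum_boole]

lemma Z_lower {p : ℝ} (hp : 0 ≤ p) (hp1 : p ≤ 1) (β : ℝ) (N : ℕ) :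
    (1 - p) ^ N * Real.exp (β * N) ≤ Z p (fun _ => 1) β 0 N := by
  have h0 : ∀ n : ℕ, pos (fun _ : Fin N => (1 : Fin 3)) n = 0 := by
    intro n
    simp [pos, step]
  have hterm : pwt p (fun _ : Fin N => (1 : Fin 3)) *
      Real.exp (β * ∑ n ∈ Finset.Icc 1 N,
        (if pos (fun _ : Fin N => (1 : Fin 3)) n = 0 then (1:ℝ) else 0)
        + β * 0 * ((pos (fun _ : Fin N => (1 : Fin 3)) N : ℤ) : ℝ))
      = (1 - p) ^ N * Real.exp (β * N) := by
    congr 1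
    · simp [pwt, wt]
    · congr 1
      simp [h0, Nat.card_Icc]
  calc (1 - p) ^ N * Real.exp (β * N)
      = _ := hterm.symm
    _ ≤ Z p (fun _ => 1) β 0 N := by
        apply Finset.single_le_sum (f := fun ξ : Fin N → Fin 3 =>
          pwt p ξ * Real.exp (β * ∑ n ∈ Finset.Icc 1 N, (if pos ξ n = 0 then (1:ℝ) else 0)
            + β * 0 * ((pos ξ N : ℤ) : ℝ)))
          (fun ξ _ => mul_nonneg (pwt_nonneg hp hp1 ξ) (Real.exp_pos _).le)
          (Finset.mem_univ _)

lemma Z_upper {p : ℝ} (hp : 0 ≤ p) (hp1 : p ≤ 1) {β : ℝ} (hβ : 0 ≤ β) (N : ℕ) :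
    Z p (fun _ => 1) β 0 N ≤ Real.exp (β * N) * ((1 - p) + p * Real.exp (-(β / 2))) ^ N := by
  have step1 : Z p (fun _ => 1) β 0 N ≤
      ∑ ξ : Fin N → Fin 3, Real.exp (β * N) *
        ∏ i : Fin N, (wt p (ξ i) * Real.exp (-(β / 2) * (if step (ξ i) ≠ 0 then 1 else 0))) := by
    apply Finset.sum_le_sum
    intro ξ _
    set m : ℕ := (Finset.univ.filter (fun i : Fin N => step (ξ i) ≠ 0)).card with hm
    have hkey := key_count ξ
    have hcard : (((Finset.Icc 1 N).filter (fun n => pos ξ n = 0)).card : ℝ)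
        ≤ N - m / 2 := by
      have : (2 * ((Finset.Icc 1 N).filter (fun n => pos ξ n = 0)).card + m : ℝ) ≤ 2 * N := by
        exact_mod_cast hkey
      linarith
    have hexp : β * ∑ n ∈ Finset.Icc 1 N, (if pos ξ n = 0 then (1:ℝ) else 0)
        + β * 0 * ((pos ξ N : ℤ) : ℝ) ≤ β * N + (-(β / 2)) * m := by
      rw [pin_sum_eq]
      have := mul_le_mul_of_nonneg_left hcard hβ
      nlinarith
    have hm_sum : (m : ℝ) = ∑ i : Fin N, (if step (ξ i) ≠ 0 then (1:ℝ) else 0) := by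
      rw [Finset.sum_boole, hm]
    calc pwt p ξ * Real.exp (β * ∑ n ∈ Finset.Icc 1 N, (if pos ξ n = 0 then (1:ℝ) else 0)
        + β * 0 * ((pos ξ N : ℤ) : ℝ))
        ≤ pwt p ξ * Real.exp (β * N + (-(β / 2)) * m) :=
          mul_le_mul_of_nonneg_left (Real.exp_le_exp.mpr hexp) (pwt_nonneg hp hp1 ξ)
      _ = Real.exp (β * N) *
          ∏ i : Fin N, (wt p (ξ i) * Real.exp (-(β / 2) * (if step (ξ i) ≠ 0 then 1 else 0))) := by
          rw [Real.exp_add, Finset.prod_mul_distrib]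
          rw [hm_sum, Finset.mul_sum, Real.exp_sum]
          unfold pwt
          ring
  refine step1.trans ?_
  rw [← Finset.mul_sum]
  have h2 : (∑ ξ : Fin N → Fin 3, ∏ i : Fin N,
      (wt p (ξ i) * Real.exp (-(β / 2) * (if step (ξ i) ≠ 0 then 1 else 0))))
      = ((1 - p) + p * Real.exp (-(β / 2))) ^ N := by
    have hps := Finset.prod_univ_sum (fun _ : Fin N => (Finset.univ : Finset (Fin 3)))
      (fun _ a => wt p a * Real.exp (-(β / 2) * (if step a ≠ 0 then 1 else 0)))
    rw [Fintype.piFinset_univ] at hps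
    rw [← hps]
    have hinner : (∑ a : Fin 3, wt p a * Real.exp (-(β / 2) * (if step a ≠ 0 then 1 else 0)))
        = (1 - p) + p * Real.exp (-(β / 2)) := by
      rw [Fin.sum_univ_three]
      norm_num [wt, step, Matrix.cons_val_two, Matrix.vecHead, Matrix.vecTail]
      ring
    rw [Finset.prod_congr rfl (fun _ _ => hinner), Finset.prod_const, Finset.card_univ,
      Fintype.card_fin]
  rw [h2]

/-- Bounds on the free energy. -/
lemma F_bounds {p : ℝ} (hp : 0 < p) (hp1 : p < 1) (F : ℝ → ℝ) {β : ℝ} (hβ : 0 ≤ β)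
    (hF : Tendsto (fun N : ℕ => Real.log (Z p (fun _ => 1) β 0 N) / N) atTop (nhds (F β))) :
    β + Real.log (1 - p) ≤ F β ∧ F β ≤ β + Real.log ((1 - p) + p * Real.exp (-(β / 2))) := by
  have hq : (0:ℝ) < 1 - p := by linarith
  have hr : (0:ℝ) < (1 - p) + p * Real.exp (-(β / 2)) := by positivity
  have hev : ∀ᶠ N : ℕ in atTop, (β + Real.log (1 - p) ≤ Real.log (Z p (fun _ => 1) β 0 N) / N ∧
      Real.log (Z p (fun _ => 1) β 0 N) / N ≤ β + Real.log ((1 - p) + p * Real.exp (-(β / 2)))) := by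
    filter_upwards [eventually_ge_atTop 1] with N hN
    have hNpos : (0:ℝ) < N := by exact_mod_cast hN
    have hZpos : 0 < Z p (fun _ => 1) β 0 N :=
      lt_of_lt_of_le (by positivity) (Z_lower hp.le hp1.le β N)
    constructor
    · have h1 : Real.log ((1 - p) ^ N * Real.exp (β * N)) ≤ Real.log (Z p (fun _ => 1) β 0 N) :=
        Real.log_le_log (by positivity) (Z_lower hp.le hp1.le β N)
      rw [Real.log_mul (by positivity) (Real.exp_ne_zero _), Real.log_pow, Real.log_exp] at h1
      rw [le_div_iff₀ hNpos]
      calc (β + Real.log (1 - p)) * N = N * Real.log (1 - p) + β * N := by ring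
        _ ≤ Real.log (Z p (fun _ => 1) β 0 N) := h1
    · have h1 : Real.log (Z p (fun _ => 1) β 0 N) ≤
          Real.log (Real.exp (β * N) * ((1 - p) + p * Real.exp (-(β / 2))) ^ N) :=
        Real.log_le_log hZpos (Z_upper hp.le hp1.le hβ N)
      rw [Real.log_mul (Real.exp_ne_zero _) (by positivity), Real.log_pow, Real.log_exp] at h1
      rw [div_le_iff₀ hNpos]
      calc Real.log (Z p (fun _ => 1) β 0 N)
          ≤ β * N + N * Real.log ((1 - p) + p * Real.exp (-(β / 2))) := h1
        _ = (β + Real.log ((1 - p) + p * Real.exp (-(β / 2)))) * N := by ring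
  constructor
  · exact ge_of_tendsto hF (hev.mono fun N h => h.1)
  · exact le_of_tendsto hF (hev.mono fun N h => h.2)

/-- `ginv` is monotone on the nonnegative reals. -/
lemma ginv_mono {p : ℝ} (hp : 0 < p) (hp1 : p < 1) (ginv : ℝ → ℝ)
    (hginv_right : ∀ x : ℝ, 0 ≤ x → g p (ginv x) = x)
    (hginv_nonneg : ∀ x : ℝ, 0 ≤ x → 0 ≤ ginv x)
    {x y : ℝ} (hx : 0 ≤ x) (hxy : x ≤ y) : ginv x ≤ ginv y := by
  by_contra h
  push_neg at h
  have hy : 0 ≤ y := le_trans hx hxy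
  have h1 : Real.cosh (ginv y) < Real.cosh (ginv x) := by
    rw [Real.cosh_lt_cosh, abs_of_nonneg (hginv_nonneg y hy), abs_of_nonneg (hginv_nonneg x hx)]
    exact h
  have h2 : g p (ginv y) < g p (ginv x) := by
    unfold g
    apply Real.log_lt_log
    · nlinarith [Real.one_le_cosh (ginv y)]
    · nlinarith
  rw [hginv_right x hx, hginv_right y hy] at h2
  linarith

/-- The asymptotics of `ginv (β + log (r β)) - β` when `r β → 1 - p` from above. -/
lemma bound_tendsto {p : ℝ} (hp : 0 < p) (hp1 : p < 1) (ginv : ℝ → ℝ)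
    (hginv_left : ∀ y : ℝ, 0 ≤ y → ginv (g p y) = y)
    (r : ℝ → ℝ) (hr : Tendsto r atTop (nhds (1 - p)))
    (hr1 : ∀ β : ℝ, 1 - p ≤ r β) :
    Tendsto (fun β : ℝ => ginv (β + Real.log (r β)) - β) atTop
      (nhds (Real.log (1 - p) - Real.log (p / 2))) := by
  have hq : (0:ℝ) < 1 - p := by linarith
  set q : ℝ := 1 - p with hqdef
  set v : ℝ → ℝ := fun β => (r β - q * Real.exp (-β)) / p with hv
  have hvlim : Tendsto v atTop (nhds (q / p)) := by
    have h1 : Tendsto (fun β : ℝ => q * Real.exp (-β)) atTop (nhds 0) := by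
      simpa using (Real.tendsto_exp_neg_atTop_nhds_zero.const_mul q)
    have := (hr.sub h1).div_const p
    simpa using this
  have he2 : Tendsto (fun β : ℝ => Real.exp (-β) ^ 2) atTop (nhds 0) := by
    simpa using (Real.tendsto_exp_neg_atTop_nhds_zero.pow 2)
  have hinnerlim : Tendsto (fun β : ℝ => v β + Real.sqrt (v β ^ 2 - Real.exp (-β) ^ 2))
      atTop (nhds (2 * (q / p))) := by
    have h1 : Tendsto (fun β : ℝ => v β ^ 2 - Real.exp (-β) ^ 2) atTop (nhds ((q/p)^2)) := by
      have := (hvlim.pow 2).sub he2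
      simpa using this
    have h2 := h1.sqrt
    rw [Real.sqrt_sq (by positivity)] at h2
    have := hvlim.add h2
    convert this using 2
    ring
  have hloglim : Tendsto (fun β : ℝ => Real.log (v β + Real.sqrt (v β ^ 2 - Real.exp (-β) ^ 2)))
      atTop (nhds (Real.log (1 - p) - Real.log (p / 2))) := by
    have h1 := hinnerlim.log (by positivity)
    have h2 : Real.log (2 * (q / p)) = Real.log (1 - p) - Real.log (p / 2) := by
      rw [show 2 * (q / p) = q / (p / 2) by field_simp]
      rw [Real.log_div (by positivity) (by positivity)]
    rwa [h2] at h1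
  refine Tendsto.congr' ?_ hloglim
  filter_upwards [Real.tendsto_exp_atTop.eventually_ge_atTop ((q + p) / q)] with β hβ
  have hrpos : 0 < r β := lt_of_lt_of_le hq (hr1 β)
  set t : ℝ := (Real.exp β * r β - q) / p with ht
  have ht1 : 1 ≤ t := by
    have h1 : q + p ≤ Real.exp β * q := (div_le_iff₀ hq).mp hβ
    have h2 : Real.exp β * q ≤ Real.exp β * r β :=
      mul_le_mul_of_nonneg_left (hr1 β) (Real.exp_pos β).le
    rw [ht, le_div_iff₀ hp]
    linarith
  have hsq : (0:ℝ) ≤ t ^ 2 - 1 := by nlinarith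
  set u : ℝ := t + Real.sqrt (t ^ 2 - 1) with hu
  have hu1 : 1 ≤ u := le_trans ht1 (le_add_of_nonneg_right (Real.sqrt_nonneg _))
  have hupos : 0 < u := lt_of_lt_of_le one_pos hu1
  have hs2 : Real.sqrt (t ^ 2 - 1) ^ 2 = t ^ 2 - 1 := Real.sq_sqrt hsq
  have huinv : u⁻¹ = t - Real.sqrt (t ^ 2 - 1) :=
    inv_eq_of_mul_eq_one_right (by rw [hu]; nlinarith)
  have hcosh : Real.cosh (Real.log u) = t := by
    rw [Real.cosh_eq, Real.exp_log hupos, Real.exp_neg, Real.exp_log hupos, huinv]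
    ring
  have hgy : g p (Real.log u) = β + Real.log (r β) := by
    rw [g, hcosh]
    have heq : p * t + (1 - p) = Real.exp β * r β := by
      rw [ht]; field_simp; rw [hqdef]; ring
    rw [heq, Real.log_mul (Real.exp_ne_zero _) (ne_of_gt hrpos), Real.log_exp]
  have hy0 : 0 ≤ Real.log u := Real.log_nonneg hu1
  have hginv_eq : ginv (β + Real.log (r β)) = Real.log u := by
    rw [← hgy, hginv_left _ hy0]
  have hts : t * Real.exp (-β) = v β := by
    rw [ht, hv, Real.exp_neg]
    field_simp
    have hee : Real.exp (-β) * Real.exp β = 1 := by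
      rw [← Real.exp_add]; simp
    linear_combination (1 - p) * hee
  have hss : Real.sqrt (t ^ 2 - 1) * Real.exp (-β) = Real.sqrt (v β ^ 2 - Real.exp (-β) ^ 2) := by
    have h1 : Real.sqrt ((t ^ 2 - 1) * Real.exp (-β) ^ 2) = Real.sqrt (t ^ 2 - 1) * Real.exp (-β) := by
      rw [Real.sqrt_mul hsq, Real.sqrt_sq (Real.exp_pos _).le]
    have h2 : (t ^ 2 - 1) * Real.exp (-β) ^ 2 = v β ^ 2 - Real.exp (-β) ^ 2 := by
      rw [← hts]; ring
    rw [← h1, h2]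
  have hue : u * Real.exp (-β) = v β + Real.sqrt (v β ^ 2 - Real.exp (-β) ^ 2) := by
    rw [hu, add_mul, hts, hss]
  rw [hginv_eq, ← hue, Real.log_mul (ne_of_gt hupos) (Real.exp_ne_zero _), Real.log_exp]
  ring

/-- for the homogeneous model with `0 < p < 1`,
`β (f_c(β) - 1) → log q - log(p/2)` as `β → ∞`. -/
theorem stmt_5 (p : ℝ) (hp : 0 < p) (hp1 : p < 1)
    (F : ℝ → ℝ)
    (hF : ∀ β : ℝ, 0 ≤ β →
      Tendsto (fun N : ℕ => Real.log (Z p (fun _ => 1) β 0 N) / N) atTop (nhds (F β)))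
    (ginv : ℝ → ℝ)
    (hginv_left : ∀ y : ℝ, 0 ≤ y → ginv (g p y) = y)
    (hginv_right : ∀ x : ℝ, 0 ≤ x → g p (ginv x) = x)
    (hginv_nonneg : ∀ x : ℝ, 0 ≤ x → 0 ≤ ginv x) :
    Tendsto (fun β : ℝ => β * (ginv (F β) / β - 1)) atTop
      (nhds (Real.log (1 - p) - Real.log (p / 2))) := by
  have hq : (0:ℝ) < 1 - p := by linarith
  set r2 : ℝ → ℝ := fun β => (1 - p) + p * Real.exp (-(β / 2)) with hr2def
  have hr2 : Tendsto r2 atTop (nhds (1 - p)) := by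
    have h1 : Tendsto (fun β : ℝ => β / 2) atTop atTop :=
      Tendsto.atTop_div_const two_pos tendsto_id
    have h2 : Tendsto (fun β : ℝ => Real.exp (-(β / 2))) atTop (nhds 0) :=
      Real.tendsto_exp_neg_atTop_nhds_zero.comp h1
    have := (tendsto_const_nhds (x := (1 - p : ℝ)) (f := atTop)).add (h2.const_mul p)
    simpa using this
  have hr2ge : ∀ β : ℝ, 1 - p ≤ r2 β := by
    intro β
    have : 0 ≤ p * Real.exp (-(β / 2)) := by positivity
    simp only [hr2def]
    linarith
  have B1 := bound_tendsto hp hp1 ginv hginv_left (fun _ => (1 - p)) tendsto_const_nhds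
    (fun _ => le_refl _)
  have B2 := bound_tendsto hp hp1 ginv hginv_left r2 hr2 hr2ge
  have hmain : Tendsto (fun β : ℝ => ginv (F β) - β) atTop
      (nhds (Real.log (1 - p) - Real.log (p / 2))) := by
    apply tendsto_of_tendsto_of_tendsto_of_le_of_le' B1 B2
    · filter_upwards [eventually_ge_atTop (0:ℝ), eventually_ge_atTop (-Real.log (1 - p))]
        with β hβ0 hβl
      have hbase : 0 ≤ β + Real.log (1 - p) := by linarith
      have hFb := F_bounds hp hp1 F hβ0 (hF β hβ0)
      have := ginv_mono hp hp1 ginv hginv_right hginv_nonneg hbase hFb.1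
      linarith
    · filter_upwards [eventually_ge_atTop (0:ℝ), eventually_ge_atTop (-Real.log (1 - p))]
        with β hβ0 hβl
      have hbase : 0 ≤ β + Real.log (1 - p) := by linarith
      have hFb := F_bounds hp hp1 F hβ0 (hF β hβ0)
      have hF0 : 0 ≤ F β := le_trans hbase hFb.1
      have := ginv_mono hp hp1 ginv hginv_right hginv_nonneg hF0 hFb.2
      linarith
  refine Tendsto.congr' ?_ hmain
  filter_upwards [eventually_ge_atTop (1:ℝ)] with β hβ
  have hβ0 : β ≠ 0 := by linarith
  field_simp
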